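/- In the Klein bottle group K = ⟨x, y | x*y*x⁻¹*y = e⟩, the singleton {y̅} (the image of y in K) belongs to E(K), the smallest family of subsets of K containing all S with S ∩ S⁻¹ ≠ ∅ and closed under the rules: T ∪ {a}, T ∪ {b} ∈ E(K) ⟹ T ∪ {a*b} ∈ E(K), and T ∪ {b*a} ∈ E(K) ⟹ T ∪ {a*b} ∈ E(K). Consequently, K is not bi-orderable. -/

import Mathlib

/-- The inductive family `E(G)` of subsets of a group `G`: a set is in `E(G)` if it meets
its own set of inverses, and the family is closed under the rules
`T ∪ {a}, T ∪ {b} ∈ E(G) ⟹ T ∪ {a*b} ∈ E(G)` and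
`T ∪ {b*a} ∈ E(G) ⟹ T ∪ {a*b} ∈ E(G)`. -/
inductive BiD {G : Type*} [Group G] : Set G → Prop
  | base (S : Set G) (a : G) (ha : a ∈ S) (hinv : a⁻¹ ∈ S) : BiD S
  | step (T : Set G) (a b : G) (h1 : BiD (T ∪ {a})) (h2 : BiD (T ∪ {b})) :
      BiD (T ∪ {a * b})
  | swap (T : Set G) (a b : G) (h : BiD (T ∪ {b * a})) : BiD (T ∪ {a * b})

/-- The single relator `x * y * x⁻¹ * y` of the Klein bottle group, with
`x = FreeGroup.of true` and `y = FreeGroup.of false`. -/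
def kleinRels : Set (FreeGroup Bool) :=
  {FreeGroup.of true * FreeGroup.of false * (FreeGroup.of true)⁻¹ * FreeGroup.of false}

/-- The Klein bottle group `⟨x, y ∣ x*y*x⁻¹*y⟩`. -/
abbrev KleinBottleGroup := PresentedGroup kleinRels

/-- Invariant: any `BiD` set contains an element `≤ 1` for any bi-compatible total preorder. -/
lemma BiD.exists_le {G : Type*} [Group G] {S : Set G} (hS : BiD S)
    (le : G → G → Prop) (htrans : ∀ a b c, le a b → le b c → le a c)
    (htot : ∀ a b, le a b ∨ le b a)
    (hcompat : ∀ a b c d, le a b → le (c * a * d) (c * b * d)) :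
    ∃ s ∈ S, le s 1 := by
  induction hS with
  | base S a ha hinv =>
    rcases htot a 1 with h | h
    · exact ⟨a, ha, h⟩
    · refine ⟨a⁻¹, hinv, ?_⟩
      have := hcompat 1 a a⁻¹ 1 h
      simpa using this
  | step T a b h1 h2 ih1 ih2 =>
    rcases ih1 with ⟨s, hs, hsle⟩
    rcases hs with hs | hs
    · exact ⟨s, Or.inl hs, hsle⟩
    · rcases ih2 with ⟨t, ht, htle⟩
      rcases ht with ht | ht
      · exact ⟨t, Or.inl ht, htle⟩
      · refine ⟨a * b, Or.inr rfl, ?_⟩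
        rcases hs with rfl; rcases ht with rfl
        have h1 := hcompat s 1 1 t hsle
        simp only [one_mul, mul_one] at h1
        exact htrans _ _ _ h1 htle
  | swap T a b h ih =>
    rcases ih with ⟨s, hs, hsle⟩
    rcases hs with hs | hs
    · exact ⟨s, Or.inl hs, hsle⟩
    · refine ⟨a * b, Or.inr rfl, ?_⟩
      rcases hs with rfl
      have := hcompat (b * a) 1 a a⁻¹ hsle
      simpa [mul_assoc] using this

theorem stmt19 :
    BiD ({PresentedGroup.of false} : Set KleinBottleGroup) ∧
    ¬ ∃ le : KleinBottleGroup → KleinBottleGroup → Prop,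
      (∀ a, le a a) ∧ (∀ a b, le a b → le b a → a = b) ∧
      (∀ a b c, le a b → le b c → le a c) ∧
      (∀ a b, le a b ∨ le b a) ∧
      (∀ a b c d, le a b → le (c * a * d) (c * b * d)) := by
  set x : KleinBottleGroup := PresentedGroup.of true with hx
  set y : KleinBottleGroup := PresentedGroup.of false with hy
  have hrel : x * y * x⁻¹ * y = 1 := by
    have h : (PresentedGroup.mk kleinRels)
        (FreeGroup.of true * FreeGroup.of false * (FreeGroup.of true)⁻¹ * FreeGroup.of false)
        = 1 := by
      apply (QuotientGroup.eq_one_iff _).2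
      exact Subgroup.subset_normalClosure rfl
    simpa [map_mul, map_inv, hx, hy, PresentedGroup.of] using h
  have h1 : x * y * x⁻¹ = y⁻¹ := eq_inv_of_mul_eq_one_left hrel
  have h1' : x * y⁻¹ * x⁻¹ = y := by
    have := congrArg (fun g => g⁻¹) h1
    simpa [mul_assoc] using this
  have hconj : x⁻¹ * y * x = y⁻¹ :=
    calc x⁻¹ * y * x = x⁻¹ * (x * y⁻¹ * x⁻¹) * x := by rw [h1']
    _ = y⁻¹ := by group
  have hbid : BiD ({y} : Set KleinBottleGroup) := by
    have hb1 : BiD (({y} : Set KleinBottleGroup) ∪ {y⁻¹}) :=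
      BiD.base _ y (Or.inl rfl) (Or.inr rfl)
    have hb2 : BiD (({y} : Set KleinBottleGroup) ∪ {y⁻¹ * y⁻¹}) :=
      BiD.step _ y⁻¹ y⁻¹ hb1 hb1
    have e1 : (x⁻¹ * (y * y)) * x = y⁻¹ * y⁻¹ := by
      rw [show (x⁻¹ * (y * y)) * x = (x⁻¹ * y * x) * (x⁻¹ * y * x) by group, hconj]
    have hb2' : BiD (({y} : Set KleinBottleGroup) ∪ {(x⁻¹ * (y * y)) * x}) := by
      rw [e1]; exact hb2
    have hb3 : BiD (({y} : Set KleinBottleGroup) ∪ {x * (x⁻¹ * (y * y))}) :=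
      BiD.swap _ x (x⁻¹ * (y * y)) hb2'
    have hb3' : BiD (({y} : Set KleinBottleGroup) ∪ {y * y}) := by
      rwa [show x * (x⁻¹ * (y * y)) = y * y by group] at hb3
    have hb4 : BiD (({y} : Set KleinBottleGroup) ∪ {y⁻¹ * (y * y)}) :=
      BiD.step _ y⁻¹ (y * y) hb1 hb3'
    rwa [show y⁻¹ * (y * y) = y by group, Set.union_self] at hb4
  refine ⟨hbid, ?_⟩
  rintro ⟨le, hrefl, hanti, htrans, htot, hcompat⟩
  obtain ⟨s, hs, hle⟩ := hbid.exists_le le htrans htot hcompat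
  obtain ⟨t, ht, hge⟩ := hbid.exists_le (fun a b => le b a)
    (fun a b c hab hbc => htrans c b a hbc hab) (fun a b => htot b a)
    (fun a b c d hab => hcompat b a c d hab)
  rcases hs with rfl
  rcases ht with rfl
  have hy1 : y = 1 := hanti _ _ hle hge
  -- contradiction via a homomorphism to `Equiv.Perm ℤ`
  have hmap : ∀ r ∈ kleinRels, FreeGroup.lift
      (fun b : Bool => if b then Equiv.neg ℤ else Equiv.addRight (1 : ℤ)) r = 1 := by
    intro r hr
    simp only [kleinRels, Set.mem_singleton_iff] at hr
    subst hr
    simp only [map_mul, map_inv, FreeGroup.lift_apply_of, if_true, Bool.false_eq_true, if_false]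
    ext z
    simp [Equiv.Perm.mul_apply, Equiv.Perm.inv_def, Equiv.neg_apply, Equiv.coe_addRight]
  have h0 : PresentedGroup.toGroup hmap y = Equiv.addRight (1 : ℤ) := by
    rw [hy]
    simpa using PresentedGroup.toGroup.of hmap (x := false)
  have hone : PresentedGroup.toGroup hmap y = 1 := by rw [hy1, map_one]
  rw [h0] at hone
  have := congrArg (fun e : Equiv.Perm ℤ => e 0) hone
  simpa using this
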